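/- Let n ≥ 0 and let F be a functor in Fct(C, A) belonging to Pol_n. Then any direct summand of F belongs to Pol_n: if F is isomorphic to a biproduct G ⊕ G' in Fct(C, A), then G ∈ Pol_n. -/

import Mathlib

open CategoryTheory CategoryTheory.Limits CategoryTheory.MonoidalCategory

variable {C : Type*} [Category C] [MonoidalCategory C]
variable {A : Type*} [Category A] [Abelian A]

/-- The translation endofunctor `τ_x` of `Fct(C, A)`: precomposition with `x ⊗ -`. -/
noncomputable def tauF (A : Type*) [Category A] (x : C) : (C ⥤ A) ⥤ (C ⥤ A) :=
  (Functor.whiskeringLeft C C A).obj (tensorLeft x)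

/-- The component `i_x(F) : F ⟶ τ_x F`, whose component at `c` is
`F` applied to `c ≅ 𝟙 ⊗ c ⟶ x ⊗ c`. -/
def iApp (hI : IsInitial (𝟙_ C)) (x : C) (F : C ⥤ A) : F ⟶ tensorLeft x ⋙ F where
  app c := F.map ((λ_ c).inv ≫ hI.to x ▷ c)
  naturality c c' f := by
    dsimp
    rw [← F.map_comp, ← F.map_comp]
    congr 1
    rw [leftUnitor_inv_naturality_assoc, whisker_exchange, Category.assoc]

/-- The natural transformation `i_x : Id ⟶ τ_x` of endofunctors of `Fct(C, A)`. -/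
noncomputable def iNT (hI : IsInitial (𝟙_ C)) (x : C) :
    𝟭 (C ⥤ A) ⟶ tauF A x where
  app F := iApp hI x F
  naturality F G η := by
    ext c
    exact (η.naturality _).symm

/-- The evanescence endofunctor `κ_x = ker(i_x)` of `Fct(C, A)`. -/
noncomputable def kappaF (hI : IsInitial (𝟙_ C)) (x : C) : (C ⥤ A) ⥤ (C ⥤ A) :=
  kernel (iNT (A := A) hI x)

/-- The difference endofunctor `δ_x = coker(i_x)` of `Fct(C, A)`. -/
noncomputable def deltaF (hI : IsInitial (𝟙_ C)) (x : C) : (C ⥤ A) ⥤ (C ⥤ A) :=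
  cokernel (iNT (A := A) hI x)

/-- `PolAux hI (n+1) F` says that `F` is strong polynomial of degree `≤ n`;
`PolAux hI 0 F` says that `F` is the zero functor (degree `≤ -1`). -/
def PolAux (hI : IsInitial (𝟙_ C)) : ℕ → (C ⥤ A) → Prop
  | 0 => fun F => IsZero F
  | n + 1 => fun F => ∀ x : C, PolAux hI n ((deltaF hI x).obj F)

/-- `Pol hI n F` : `F` is strong polynomial of degree `≤ n` (with `Pol_m = {0}` for `m < 0`). -/
def Pol (hI : IsInitial (𝟙_ C)) (n : ℤ) (F : C ⥤ A) : Prop :=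
  PolAux hI (n + 1).toNat F

/-- Auxiliary: `PolAux` is closed under retracts. -/
lemma polAux_retract (hI : IsInitial (𝟙_ C)) (n : ℕ) :
    ∀ (F G : C ⥤ A) (i : G ⟶ F) (r : F ⟶ G), i ≫ r = 𝟙 G →
      PolAux hI n F → PolAux hI n G := by
  induction n with
  | zero =>
    intro F G i r hir hF
    show IsZero G
    rw [IsZero.iff_id_eq_zero]
    rw [← hir, hF.eq_zero_of_src r, Limits.comp_zero]
  | succ n ih =>
    intro F G i r hir hF x
    refine ih _ _ ((deltaF hI x).map i) ((deltaF hI x).map r) ?_ (hF x)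
    rw [← Functor.map_comp, hir, CategoryTheory.Functor.map_id]

theorem pol_direct_summand (hI : IsInitial (𝟙_ C)) (n : ℕ) (F G G' : C ⥤ A)
    (hF : Pol hI n F) (h : Nonempty (F ≅ G ⊞ G')) : Pol hI n G := by
  obtain ⟨e⟩ := h
  exact polAux_retract hI _ F G (biprod.inl ≫ e.inv) (e.hom ≫ biprod.fst)
    (by simp) hF
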